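/- For every β ∈ (0,1], the function δ ↦ g_k(β,δ) is strictly concave on the interval [0, β/2]; in particular, for every δ ∈ (0, β/2), its second derivative with respect to δ equals 2·H''(δ) + ((2−β)²/(1−δ)³)·H''((β−2δ)/(1−δ)) and is strictly negative, where H''(t) = −(log₂ e)/(t(1−t)). -/

import Mathlib

/-- The binary entropy function `H(t) = -t·log₂ t - (1-t)·log₂(1-t)`. -/
noncomputable def binEntropy (t : ℝ) : ℝ :=
  -(t * Real.logb 2 t) - (1 - t) * Real.logb 2 (1 - t)

/-- The second derivative of the binary entropy, `H''(t) = −(log₂ e)/(t(1−t))`. -/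
noncomputable def binEntropy'' (t : ℝ) : ℝ :=
  -(Real.logb 2 (Real.exp 1)) / (t * (1 - t))

/-- The exponent function `g_k(β,δ)`. -/
noncomputable def gExp (k : ℕ) (β δ : ℝ) : ℝ :=
  (β - 2 * δ) * Real.logb 2 ((k : ℝ) - 1) - (1 - δ) * Real.logb 2 (k : ℝ) +
    2 * binEntropy δ + (1 - δ) * binEntropy ((β - 2 * δ) / (1 - δ))

/-- Auxiliary closed form for `gExp` on `[0, β/2]`. -/
noncomputable def fAux (k : ℕ) (β δ : ℝ) : ℝ :=
  (β - 2 * δ) * Real.logb 2 ((k : ℝ) - 1) - (1 - δ) * Real.logb 2 (k : ℝ) -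
    (2 * (δ * Real.log δ) + (1 - δ) * Real.log (1 - δ) +
      (β - 2 * δ) * Real.log (β - 2 * δ) +
      (1 - β + δ) * Real.log (1 - β + δ)) / Real.log 2

lemma psi_div (a c : ℝ) (ha : 0 ≤ a) (hc : 0 < c) :
    c * (a / c * Real.log (a / c)) = a * Real.log a - a * Real.log c := by
  rcases ha.eq_or_lt with h | h
  · simp [← h]
  · rw [Real.log_div h.ne' hc.ne']
    field_simp

lemma binEntropy_eq (t : ℝ) :
    binEntropy t = (-(t * Real.log t) - (1 - t) * Real.log (1 - t)) / Real.log 2 := by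
  unfold binEntropy
  rw [Real.logb, Real.logb]
  ring

lemma gExp_eq_fAux (k : ℕ) (β δ : ℝ) (hβ1 : β ≤ 1) (hδ0 : 0 ≤ δ) (hδ : 2 * δ ≤ β)
    (hδ1 : δ < 1) : gExp k β δ = fAux k β δ := by
  have h3 : (0:ℝ) < 1 - δ := by linarith
  have hb : (0:ℝ) ≤ β - 2 * δ := by linarith
  have hb' : (0:ℝ) ≤ 1 - β + δ := by linarith
  have hu1 : 1 - (β - 2 * δ) / (1 - δ) = (1 - β + δ) / (1 - δ) := by
    field_simp
    ring
  have key1 : (1 - δ) * binEntropy ((β - 2 * δ) / (1 - δ)) =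
      (-((β - 2 * δ) * Real.log (β - 2 * δ) - (β - 2 * δ) * Real.log (1 - δ)) -
        ((1 - β + δ) * Real.log (1 - β + δ) - (1 - β + δ) * Real.log (1 - δ))) /
        Real.log 2 := by
    rw [binEntropy_eq, hu1, mul_div_assoc']
    have e1 := psi_div (β - 2 * δ) (1 - δ) hb h3
    have e2 := psi_div (1 - β + δ) (1 - δ) hb' h3
    congr 1
    linear_combination (-1 : ℝ) * e1 - e2
  unfold gExp fAux
  rw [key1, binEntropy_eq]
  ring

open Real in
lemma fAux_hasDeriv (k : ℕ) (β δ : ℝ) (h1 : 0 < δ) (h2 : 0 < β - 2 * δ)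
    (h3 : 0 < 1 - δ) (h4 : 0 < 1 - β + δ) :
    HasDerivAt (fAux k β)
      (-2 * Real.logb 2 ((k : ℝ) - 1) + Real.logb 2 (k : ℝ) -
        (2 * Real.log δ - Real.log (1 - δ) - 2 * Real.log (β - 2 * δ) +
          Real.log (1 - β + δ)) / Real.log 2) δ := by
  have hl2 : Real.log 2 ≠ 0 := (Real.log_pos one_lt_two).ne'
  have dA : HasDerivAt (fun x : ℝ => 1 - x) (-1) δ := by
    simpa using (hasDerivAt_id δ).const_sub 1
  have dB : HasDerivAt (fun x : ℝ => β - 2 * x) (-2) δ := by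
    simpa using ((hasDerivAt_id δ).const_mul 2).const_sub β
  have dC : HasDerivAt (fun x : ℝ => 1 - β + x) 1 δ := by
    simpa using (hasDerivAt_id δ).const_add (1 - β)
  have d1 : HasDerivAt (fun x : ℝ => x * Real.log x) (Real.log δ + 1) δ :=
    Real.hasDerivAt_mul_log h1.ne'
  have d2 : HasDerivAt (fun x : ℝ => (1 - x) * Real.log (1 - x))
      ((Real.log (1 - δ) + 1) * (-1)) δ :=
    (Real.hasDerivAt_mul_log h3.ne').comp δ dA
  have d3 : HasDerivAt (fun x : ℝ => (β - 2 * x) * Real.log (β - 2 * x))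
      ((Real.log (β - 2 * δ) + 1) * (-2)) δ := by
    have := (Real.hasDerivAt_mul_log h2.ne').comp δ dB
    exact this
  have d4 : HasDerivAt (fun x : ℝ => (1 - β + x) * Real.log (1 - β + x))
      ((Real.log (1 - β + δ) + 1) * 1) δ :=
    (Real.hasDerivAt_mul_log h4.ne').comp δ dC
  have dL1 : HasDerivAt (fun x : ℝ => (β - 2 * x) * Real.logb 2 ((k : ℝ) - 1))
      ((-2) * Real.logb 2 ((k : ℝ) - 1)) δ := dB.mul_const _
  have dL2 : HasDerivAt (fun x : ℝ => (1 - x) * Real.logb 2 (k : ℝ))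
      ((-1) * Real.logb 2 (k : ℝ)) δ := dA.mul_const _
  have dsum := ((((d1.const_mul 2).add d2).add d3).add d4).div_const (Real.log 2)
  have dtot := (dL1.sub dL2).sub dsum
  unfold fAux
  refine dtot.congr_deriv ?_
  ring

open Real in
lemma fAux'_hasDeriv (c : ℝ) (β δ : ℝ) (h1 : 0 < δ) (h2 : 0 < β - 2 * δ)
    (h3 : 0 < 1 - δ) (h4 : 0 < 1 - β + δ) :
    HasDerivAt (fun x : ℝ => c -
        (2 * Real.log x - Real.log (1 - x) - 2 * Real.log (β - 2 * x) +
          Real.log (1 - β + x)) / Real.log 2)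
      (-(2 / δ + 1 / (1 - δ) + 4 / (β - 2 * δ) + 1 / (1 - β + δ)) / Real.log 2) δ := by
  have hl2 : Real.log 2 ≠ 0 := (Real.log_pos one_lt_two).ne'
  have dA : HasDerivAt (fun x : ℝ => 1 - x) (-1) δ := by
    simpa using (hasDerivAt_id δ).const_sub 1
  have dB : HasDerivAt (fun x : ℝ => β - 2 * x) (-2) δ := by
    simpa using ((hasDerivAt_id δ).const_mul 2).const_sub β
  have dC : HasDerivAt (fun x : ℝ => 1 - β + x) 1 δ := by
    simpa using (hasDerivAt_id δ).const_add (1 - β)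
  have e1 : HasDerivAt (fun x : ℝ => Real.log x) δ⁻¹ δ := Real.hasDerivAt_log h1.ne'
  have e2 : HasDerivAt (fun x : ℝ => Real.log (1 - x)) ((1 - δ)⁻¹ * (-1)) δ :=
    (Real.hasDerivAt_log h3.ne').comp δ dA
  have e3 : HasDerivAt (fun x : ℝ => Real.log (β - 2 * x)) ((β - 2 * δ)⁻¹ * (-2)) δ :=
    by have := (Real.hasDerivAt_log h2.ne').comp δ dB
       exact this
  have e4 : HasDerivAt (fun x : ℝ => Real.log (1 - β + x)) ((1 - β + δ)⁻¹ * 1) δ :=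
    (Real.hasDerivAt_log h4.ne').comp δ dC
  have dsum := ((((e1.const_mul 2).sub e2).sub (e3.const_mul 2)).add e4).div_const
    (Real.log 2)
  have dtot := dsum.const_sub c
  refine dtot.congr_deriv ?_
  ring

/-- For `β ∈ (0,1]`, `δ ↦ g_k(β,δ)` is strictly concave on `[0,β/2]`, and for
every `δ ∈ (0,β/2)` its second derivative equals
`2·H''(δ) + ((2−β)²/(1−δ)³)·H''((β−2δ)/(1−δ))`, which is strictly negative. -/
theorem gExp_strictConcave_and_second_deriv (k : ℕ) (hk : 2 ≤ k)
    (β : ℝ) (hβ0 : 0 < β) (hβ1 : β ≤ 1) :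
    StrictConcaveOn ℝ (Set.Icc 0 (β / 2)) (gExp k β) ∧
    ∀ δ ∈ Set.Ioo (0 : ℝ) (β / 2),
      deriv (deriv (gExp k β)) δ =
        2 * binEntropy'' δ +
          ((2 - β) ^ 2 / (1 - δ) ^ 3) * binEntropy'' ((β - 2 * δ) / (1 - δ)) ∧
      deriv (deriv (gExp k β)) δ < 0 := by
  have hl2 : (0:ℝ) < Real.log 2 := Real.log_pos one_lt_two
  set f' : ℝ → ℝ := fun x =>
    (-2 * Real.logb 2 ((k : ℝ) - 1) + Real.logb 2 (k : ℝ)) -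
      (2 * Real.log x - Real.log (1 - x) - 2 * Real.log (β - 2 * x) +
        Real.log (1 - β + x)) / Real.log 2 with hf'def
  set s : ℝ → ℝ := fun x =>
    -(2 / x + 1 / (1 - x) + 4 / (β - 2 * x) + 1 / (1 - β + x)) / Real.log 2 with hsdef
  have hEq : Set.EqOn (gExp k β) (fAux k β) (Set.Icc 0 (β / 2)) := by
    intro δ hδ
    exact gExp_eq_fAux k β δ hβ1 hδ.1 (by linarith [hδ.2]) (by linarith [hδ.2])
  have hOpen : IsOpen (Set.Ioo (0:ℝ) (β / 2)) := isOpen_Ioo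
  have hpos : ∀ δ ∈ Set.Ioo (0:ℝ) (β / 2),
      0 < δ ∧ 0 < β - 2 * δ ∧ 0 < 1 - δ ∧ 0 < 1 - β + δ := by
    intro δ hδ
    obtain ⟨h1, h2⟩ := hδ
    exact ⟨h1, by linarith, by linarith, by linarith⟩
  have hderiv1 : ∀ δ ∈ Set.Ioo (0:ℝ) (β / 2), deriv (gExp k β) δ = f' δ := by
    intro δ hδ
    obtain ⟨h1, h2, h3, h4⟩ := hpos δ hδ
    have hev : gExp k β =ᶠ[nhds δ] fAux k β :=
      Filter.eventuallyEq_of_mem (hOpen.mem_nhds hδ)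
        (fun x hx => hEq (Set.Ioo_subset_Icc_self hx))
    rw [hev.deriv_eq]
    have := (fAux_hasDeriv k β δ h1 h2 h3 h4).deriv
    rw [this]
  have hderiv2 : ∀ δ ∈ Set.Ioo (0:ℝ) (β / 2), deriv (deriv (gExp k β)) δ = s δ := by
    intro δ hδ
    obtain ⟨h1, h2, h3, h4⟩ := hpos δ hδ
    have hev : deriv (gExp k β) =ᶠ[nhds δ] f' :=
      Filter.eventuallyEq_of_mem (hOpen.mem_nhds hδ) hderiv1
    rw [hev.deriv_eq, hf'def]
    exact (fAux'_hasDeriv _ β δ h1 h2 h3 h4).deriv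
  have hsneg : ∀ δ ∈ Set.Ioo (0:ℝ) (β / 2), s δ < 0 := by
    intro δ hδ
    obtain ⟨h1, h2, h3, h4⟩ := hpos δ hδ
    have hN : 0 < 2 / δ + 1 / (1 - δ) + 4 / (β - 2 * δ) + 1 / (1 - β + δ) :=
      add_pos (add_pos (add_pos (div_pos two_pos h1) (div_pos one_pos h3))
        (div_pos (by norm_num) h2)) (div_pos one_pos h4)
    have : 0 < (2 / δ + 1 / (1 - δ) + 4 / (β - 2 * δ) + 1 / (1 - β + δ)) / Real.log 2 :=
      div_pos hN hl2
    rw [hsdef]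
    simp only [neg_div]
    exact neg_lt_zero.mpr this
  have hsform : ∀ δ ∈ Set.Ioo (0:ℝ) (β / 2),
      s δ = 2 * binEntropy'' δ +
        ((2 - β) ^ 2 / (1 - δ) ^ 3) * binEntropy'' ((β - 2 * δ) / (1 - δ)) := by
    intro δ hδ
    obtain ⟨h1, h2, h3, h4⟩ := hpos δ hδ
    have hlogb : Real.logb 2 (Real.exp 1) = 1 / Real.log 2 := by
      rw [Real.logb, Real.log_exp]
    have key : (β - 2 * δ) / (1 - δ) * (1 - (β - 2 * δ) / (1 - δ)) =
        (β - 2 * δ) * (1 - β + δ) / (1 - δ) ^ 2 := by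
      field_simp
      ring
    unfold binEntropy''
    rw [hlogb, key, hsdef]
    field_simp
    ring
  refine ⟨?_, fun δ hδ => ⟨by rw [hderiv2 δ hδ]; exact hsform δ hδ,
    by rw [hderiv2 δ hδ]; exact hsneg δ hδ⟩⟩
  apply strictConcaveOn_of_deriv2_neg (convex_Icc _ _)
  · have c1 : Continuous fun x : ℝ => x * Real.log x := Real.continuous_mul_log
    have c2 : Continuous fun x : ℝ => (1 - x) * Real.log (1 - x) :=
      c1.comp (continuous_const.sub continuous_id)
    have c3 : Continuous fun x : ℝ => (β - 2 * x) * Real.log (β - 2 * x) :=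
      c1.comp (continuous_const.sub (continuous_const.mul continuous_id))
    have c4 : Continuous fun x : ℝ => (1 - β + x) * Real.log (1 - β + x) :=
      c1.comp (continuous_const.add continuous_id)
    have hc : Continuous (fAux k β) := by
      unfold fAux
      exact (((continuous_const.sub (continuous_const.mul continuous_id)).mul
        continuous_const).sub ((continuous_const.sub continuous_id).mul
        continuous_const)).sub
        ((((((continuous_const.mul c1)).add c2).add c3).add c4).div_const _)
    exact hc.continuousOn.congr hEq
  · intro x hx
    rw [interior_Icc] at hx
    have : deriv^[2] (gExp k β) x = deriv (deriv (gExp k β)) x := rfl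
    rw [this, hderiv2 x hx]
    exact hsneg x hx
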